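/- arXiv:1101.1856 — 2 statements merged into one kernel-verified Lean document; each statement's English description precedes it below -/
import Mathlib

section
/- Let X be a paracompact topological space. If the local covering dimension of X is at most n (every point has a closed neighborhood of covering dimension ≤ n), then the covering dimension of X is at most n. -/
open Set

/-- Covering dimension at most `n`. -/
def CovDimLE (X : Type*) [TopologicalSpace X] (n : ℕ) : Prop :=
  ∀ U : Set (Set X), U.Finite → (∀ u ∈ U, IsOpen u) → ⋃₀ U = Set.univ →
    ∃ V : Set (Set X), V.Finite ∧ (∀ v ∈ V, IsOpen v) ∧ ⋃₀ V = Set.univ ∧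
      (∀ v ∈ V, ∃ u ∈ U, v ⊆ u) ∧ ∀ x : X, {v ∈ V | x ∈ v}.ncard ≤ n + 1

/-- Key refinement lemma: if `D` (as a subspace) satisfies `CovDimLE` at level `n`,
then any finite family of opens of `X` covering `D` can be shrunk to a family with
the same index set, still covering `D`, with order `≤ n+1` at points of `D`. -/
lemma key_refine {X : Type} [TopologicalSpace X] {n : ℕ} {D : Set X}
    (hD : CovDimLE D n) {ι : Type} [Finite ι] (G : ι → Set X)
    (hGo : ∀ i, IsOpen (G i)) (hcov : D ⊆ ⋃ i, G i) :
    ∃ O : ι → Set X, (∀ i, IsOpen (O i)) ∧ (∀ i, O i ⊆ G i) ∧ (D ⊆ ⋃ i, O i) ∧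
      ∀ x ∈ D, {i | x ∈ O i}.ncard ≤ n + 1 := by
  classical
  set U' : Set (Set ↥D) := range (fun i => Subtype.val ⁻¹' G i) with hU'
  have hfin : U'.Finite := finite_range _
  have hopen : ∀ v ∈ U', IsOpen v := by
    rintro v ⟨i, rfl⟩; exact (hGo i).preimage continuous_subtype_val
  have hcov' : ⋃₀ U' = univ := by
    rw [hU', sUnion_range]
    ext x
    simp only [mem_iUnion, mem_univ, iff_true, mem_preimage]
    exact mem_iUnion.mp (hcov x.2)
  obtain ⟨V, hVfin, hVopen, hVcov, hVref, hVord⟩ := hD U' hfin hopen hcov'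
  have hch : ∀ v : V, ∃ (i : ι) (o : Set X), IsOpen o ∧ o ⊆ G i ∧ Subtype.val ⁻¹' o = (v : Set ↥D) := by
    rintro ⟨v, hv⟩
    obtain ⟨u, hu, hvu⟩ := hVref v hv
    obtain ⟨i, rfl⟩ := hu
    obtain ⟨o0, ho0, hpre⟩ := isOpen_induced_iff.mp (hVopen v hv)
    refine ⟨i, o0 ∩ G i, ho0.inter (hGo i), inter_subset_right, ?_⟩
    rw [preimage_inter, hpre]
    exact Set.inter_eq_left.mpr hvu
  choose fi fo hoo hsub hpre using hch
  refine ⟨fun i => ⋃ (v : V) (_ : fi v = i), fo v, ?_, ?_, ?_, ?_⟩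
  · intro i; exact isOpen_iUnion fun v => isOpen_iUnion fun _ => hoo v
  · intro i x hx
    obtain ⟨v, hv⟩ := mem_iUnion.mp hx
    obtain ⟨rfl, hx2⟩ := mem_iUnion.mp hv
    exact hsub v hx2
  · intro x hx
    have : (⟨x, hx⟩ : ↥D) ∈ ⋃₀ V := by rw [hVcov]; trivial
    obtain ⟨v, hvV, hxv⟩ := this
    have : x ∈ fo ⟨v, hvV⟩ := by
      have h2 : (⟨x, hx⟩ : ↥D) ∈ Subtype.val ⁻¹' fo ⟨v, hvV⟩ := by rw [hpre]; exact hxv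
      exact h2
    exact mem_iUnion.mpr ⟨fi ⟨v, hvV⟩, mem_iUnion.mpr ⟨⟨v, hvV⟩, mem_iUnion.mpr ⟨rfl, this⟩⟩⟩
  · intro x hx
    have hVfin' : {v ∈ V | (⟨x, hx⟩ : ↥D) ∈ v}.Finite := hVfin.subset (sep_subset _ _)
    have hmem : ∀ i, x ∈ (⋃ (v : V) (_ : fi v = i), fo v) → ∃ v : V, fi v = i ∧ x ∈ fo v := by
      intro i hi
      obtain ⟨v, hv⟩ := mem_iUnion.mp hi
      obtain ⟨he, hx'⟩ := mem_iUnion.mp hv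
      exact ⟨v, he, hx'⟩
    calc {i | x ∈ ⋃ (v : V) (_ : fi v = i), fo v}.ncard
        ≤ {v ∈ V | (⟨x, hx⟩ : ↥D) ∈ v}.ncard := by
          refine Set.ncard_le_ncard_of_injOn
            (fun i => if h : x ∈ (⋃ (v : V) (_ : fi v = i), fo v) then ((hmem i h).choose : Set ↥D) else ∅)
            ?_ ?_ hVfin'
          · intro i hi
            simp only [Set.mem_setOf_eq] at hi
            simp only [dif_pos hi]
            obtain ⟨he, hx'⟩ := (hmem i hi).choose_spec
            refine ⟨(hmem i hi).choose.2, ?_⟩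
            have h2 : (⟨x, hx⟩ : ↥D) ∈ Subtype.val ⁻¹' fo (hmem i hi).choose := hx'
            rw [hpre] at h2
            exact h2
          · intro i1 h1 i2 h2 heq
            simp only [Set.mem_setOf_eq] at h1 h2
            simp only [dif_pos h1, dif_pos h2] at heq
            have : (hmem i1 h1).choose = (hmem i2 h2).choose := Subtype.ext heq
            rw [← (hmem i1 h1).choose_spec.1, ← (hmem i2 h2).choose_spec.1, this]
      _ ≤ n + 1 := hVord ⟨x, hx⟩

/-- In a paracompact space, local covering dimension at most `n` implies covering
dimension at most `n`. -/
theorem stmt_5 {X : Type} [TopologicalSpace X] [ParacompactSpace X] (n : ℕ)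
    (hloc : ∀ x : X, ∃ D : Set X, D ∈ nhds x ∧ IsClosed D ∧ CovDimLE D n) :
    CovDimLE X n := by
  classical
  choose D hDnhd hDcl hDdim using hloc
  -- a locally finite closed cover `F` with `F t ⊆ D t`
  obtain ⟨v, hvo, hvc, hvlf, hvsub⟩ := precise_refinement (fun x => interior (D x))
    (fun x => isOpen_interior)
    (by
      apply eq_univ_of_forall
      intro y
      exact mem_iUnion.mpr ⟨y, mem_interior_iff_mem_nhds.mpr (hDnhd y)⟩)
  set F : X → Set X := fun t => closure (v t) with hFdef
  have hFD : ∀ t, F t ⊆ D t := fun t =>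
    closure_minimal ((hvsub t).trans interior_subset) (hDcl t)
  have hFlf : LocallyFinite F := hvlf.closure
  have hFcov : ∀ y : X, ∃ t, y ∈ F t := by
    intro y
    have : y ∈ ⋃ t, v t := by rw [hvc]; trivial
    obtain ⟨t, ht⟩ := mem_iUnion.mp this
    exact ⟨t, subset_closure ht⟩
  intro U hUfin hUopen hUcov
  haveI : Finite ↥U := hUfin.to_subtype
  -- the poset of partial shrinkings
  let Good : Set X × (↥U → Set X) → Prop := fun p =>
    (∀ u, IsOpen (p.2 u)) ∧ (∀ u, p.2 u ⊆ (u : Set X)) ∧ ((⋃ u, p.2 u) = univ) ∧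
    (∀ t ∈ p.1, ∀ x ∈ F t, {u : ↥U | x ∈ p.2 u}.ncard ≤ n + 1) ∧
    (∀ u : ↥U, ∀ x ∈ (u : Set X), (∀ t ∈ p.1, x ∉ F t) → x ∈ p.2 u)
  let r : {p // Good p} → {p // Good p} → Prop := fun a b =>
    a.1.1 ⊆ b.1.1 ∧ (∀ u, b.1.2 u ⊆ a.1.2 u) ∧
    ∀ u, ∀ x ∈ a.1.2 u, (∀ t ∈ b.1.1 \ a.1.1, x ∉ F t) → x ∈ b.1.2 u
  have hrtrans : ∀ {a b c}, r a b → r b c → r a c := by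
    rintro a b c ⟨hT1, hG1, hl1⟩ ⟨hT2, hG2, hl2⟩
    refine ⟨hT1.trans hT2, fun u => (hG2 u).trans (hG1 u), ?_⟩
    intro u x hx hno
    have hxb : x ∈ b.1.2 u := hl1 u x hx (fun t ht => hno t ⟨hT2 ht.1, ht.2⟩)
    exact hl2 u x hxb (fun t ht => hno t ⟨ht.1, fun h => ht.2 (hT1 h)⟩)
  -- the bottom element
  have hbotGood : Good (∅, fun u => (u : Set X)) := by
    refine ⟨fun u => hUopen u u.2, fun u => subset_rfl, ?_, by simp, fun u x hx _ => hx⟩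
    rw [← sUnion_eq_iUnion, hUcov]
  -- extension step
  have hstep : ∀ (a : {p // Good p}) (t : X), t ∉ a.1.1 →
      ∃ b : {p // Good p}, r a b ∧ b.1.1 = insert t a.1.1 := by
    rintro ⟨⟨T, G⟩, hGo', hGsub, hGcov, hGord, hGloc⟩ t ht
    obtain ⟨O, hOo, hOG, hOcov, hOord⟩ := key_refine (hDdim t) G hGo'
      (by rw [hGcov]; exact subset_univ _)
    have hFcl : IsClosed (F t) := isClosed_closure
    refine ⟨⟨(insert t T, fun u => G u ∩ (O u ∪ (F t)ᶜ)), ?_, ?_, ?_, ?_, ?_⟩, ?_, rfl⟩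
    · exact fun u => (hGo' u).inter ((hOo u).union hFcl.isOpen_compl)
    · exact fun u => inter_subset_left.trans (hGsub u)
    · apply eq_univ_of_forall
      intro y
      by_cases hy : y ∈ F t
      · obtain ⟨u, hu⟩ := mem_iUnion.mp (hOcov (hFD t hy))
        exact mem_iUnion.mpr ⟨u, hOG u hu, Or.inl hu⟩
      · have : y ∈ ⋃ u, G u := by rw [hGcov]; trivial
        obtain ⟨u, hu⟩ := mem_iUnion.mp this
        exact mem_iUnion.mpr ⟨u, hu, Or.inr hy⟩
    · intro s hs x hx
      rcases mem_insert_iff.mp hs with rfl | hsT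
      · refine le_trans (Set.ncard_le_ncard ?_ (Set.toFinite _)) (hOord x (hFD s hx))
        intro u hu
        rcases hu.2 with h | h
        · exact h
        · exact absurd hx h
      · refine le_trans (Set.ncard_le_ncard ?_ (Set.toFinite _)) (hGord s hsT x hx)
        exact fun u hu => hu.1
    · intro u x hx hno
      have hxG : x ∈ G u := hGloc u x hx (fun s hs => hno s (mem_insert_of_mem _ hs))
      exact ⟨hxG, Or.inr (hno t (mem_insert _ _))⟩
    · -- r a b
      refine ⟨subset_insert _ _, fun u => inter_subset_left, ?_⟩
      intro u x hx hno
      refine ⟨hx, Or.inr ?_⟩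
      exact hno t ⟨mem_insert _ _, ht⟩
  -- chains are bounded
  have hchains : ∀ c, IsChain r c → ∃ ub, ∀ a ∈ c, r a ub := by
    intro C hC
    rcases C.eq_empty_or_nonempty with rfl | hCne
    · exact ⟨⟨_, hbotGood⟩, by simp⟩
    -- upper bound data
    set T' : Set X := ⋃ e ∈ C, (e : {p // Good p}).1.1 with hT'
    set G' : ↥U → Set X := fun u => ⋂ e ∈ C, (e : {p // Good p}).1.2 u with hG'
    -- comparability helper
    have hcomp : ∀ e ∈ C, ∀ e' ∈ C, r e e' ∨ r e' e := by
      intro e he e' he'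
      rcases eq_or_ne e e' with rfl | hne
      · exact Or.inl ⟨subset_rfl, fun u => subset_rfl, fun u x hx _ => hx⟩
      · exact hC he he' hne
    -- for each x there is an element of the chain capturing all relevant indices near x
    have hkey : ∀ x : X, ∃ (N : Set X), IsOpen N ∧ x ∈ N ∧ ∃ e₀ ∈ C,
        (∀ t, t ∈ T' → (F t ∩ N).Nonempty → t ∈ (e₀ : {p // Good p}).1.1) := by
      intro x
      obtain ⟨s, hs, hsfin⟩ := hFlf x
      set N := interior s with hN
      have hNx : x ∈ N := mem_interior_iff_mem_nhds.mpr hs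
      set Φ : Set X := {t | (F t ∩ N).Nonempty} with hΦ
      have hΦfin : Φ.Finite := hsfin.subset (fun t ht => ht.mono (inter_subset_inter_right _ interior_subset))
      -- maximize T_e ∩ Φ over the chain
      have himfin : ((fun e : {p // Good p} => e.1.1 ∩ Φ) '' C).Finite := by
        apply Set.Finite.subset hΦfin.finite_subsets
        rintro s' ⟨e, _, rfl⟩
        exact inter_subset_right
      obtain ⟨e₀, he₀, hmax⟩ := Set.Finite.exists_maximalFor'
        (fun e : {p // Good p} => e.1.1 ∩ Φ) C himfin hCne
      have hgreat : ∀ e ∈ C, e.1.1 ∩ Φ ⊆ e₀.1.1 ∩ Φ := by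
        intro e he
        rcases hcomp e he e₀ he₀ with h | h
        · exact inter_subset_inter_left _ h.1
        · have := hmax he (inter_subset_inter_left _ h.1)
          exact this
      refine ⟨N, isOpen_interior, hNx, e₀, he₀, ?_⟩
      intro t htT' htN
      obtain ⟨e, heC, hte⟩ := mem_iUnion₂.mp htT'
      exact (hgreat e heC ⟨hte, htN⟩).1
    -- the relation of each chain element to the bound
    have hloc' : ∀ e ∈ C, ∀ u (x : X), x ∈ (e : {p // Good p}).1.2 u →
        (∀ t ∈ T' \ e.1.1, x ∉ F t) → x ∈ G' u := by
      intro e he u x hx hno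
      apply mem_iInter₂.mpr
      intro e' he'
      rcases hcomp e he e' he' with h | h
      · refine h.2.2 u x hx ?_
        intro t ht
        refine hno t ⟨mem_iUnion₂.mpr ⟨e', he', ht.1⟩, ht.2⟩
      · exact h.2.1 u hx
    have hGood : Good (T', G') := by
      refine ⟨?_, ?_, ?_, ?_, ?_⟩
      · -- openness
        intro u
        rw [isOpen_iff_forall_mem_open]
        intro x hx
        obtain ⟨N, hNo, hNx, e₀, he₀, hcap⟩ := hkey x
        refine ⟨e₀.1.2 u ∩ N, ?_, (e₀.2.1 u).inter hNo, mem_iInter₂.mp hx e₀ he₀, hNx⟩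
        -- e₀.1.2 u ∩ N ⊆ G' u
        intro y hy
        apply mem_iInter₂.mpr
        intro e he
        rcases hcomp e he e₀ he₀ with h | h
        · exact h.2.1 u hy.1
        · refine h.2.2 u y hy.1 ?_
          intro t ht hyF
          exact ht.2 (hcap t (mem_iUnion₂.mpr ⟨e, he, ht.1⟩) ⟨y, hyF, hy.2⟩)
      · intro u
        obtain ⟨e, he⟩ := hCne
        exact (biInter_subset_of_mem he).trans (e.2.2.1 u)
      · -- cover
        apply eq_univ_of_forall
        intro x
        set S : {p // Good p} → Set ↥U := fun e => {u | x ∈ e.1.2 u} with hS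
        have hSfin : ((fun e => S e) '' C).Finite := Set.toFinite _
        obtain ⟨e₀, he₀, hmin⟩ := Set.Finite.exists_minimalFor' (fun e => S e) C hSfin hCne
        have hleast : ∀ e ∈ C, S e₀ ⊆ S e := by
          intro e he
          rcases hcomp e he e₀ he₀ with h | h
          · intro u hu
            exact h.2.1 u hu
          · have hsub : S e ⊆ S e₀ := fun u hu => h.2.1 u hu
            exact hmin he hsub
        have : x ∈ ⋃ u, e₀.1.2 u := by rw [e₀.2.2.2.1]; trivial
        obtain ⟨u, hu⟩ := mem_iUnion.mp this
        refine mem_iUnion.mpr ⟨u, mem_iInter₂.mpr ?_⟩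
        intro e he
        exact hleast e he hu
      · -- order
        intro t ht x hx
        obtain ⟨e, he, hte⟩ := mem_iUnion₂.mp ht
        refine le_trans (Set.ncard_le_ncard ?_ (Set.toFinite _)) (e.2.2.2.2.1 t hte x hx)
        intro u hu
        exact mem_iInter₂.mp hu e he
      · -- localization
        intro u x hx hno
        apply mem_iInter₂.mpr
        intro e he
        refine e.2.2.2.2.2 u x hx ?_
        intro t hte
        exact hno t (mem_iUnion₂.mpr ⟨e, he, hte⟩)
    refine ⟨⟨(T', G'), hGood⟩, ?_⟩
    intro e he
    refine ⟨?_, fun u => biInter_subset_of_mem he, ?_⟩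
    · intro t ht
      exact mem_iUnion₂.mpr ⟨e, he, ht⟩
    · intro u x hx hno
      exact hloc' e he u x hx hno
  -- Zorn
  obtain ⟨m, hm⟩ := exists_maximal_of_chains_bounded hchains hrtrans
  have hTuniv : m.1.1 = univ := by
    apply eq_univ_of_forall
    intro t
    by_contra ht
    obtain ⟨b, hrb, hb⟩ := hstep m t ht
    have := (hm b hrb).1
    rw [hb] at this
    exact ht (this (mem_insert _ _))
  -- conclude
  set G : ↥U → Set X := m.1.2 with hG
  obtain ⟨hGo', hGsub, hGcov, hGord, -⟩ := m.2
  refine ⟨range (fun u : ↥U => G u), finite_range _, ?_, ?_, ?_, ?_⟩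
  · rintro w ⟨u, rfl⟩; exact hGo' u
  · rw [sUnion_range]; exact hGcov
  · rintro w ⟨u, rfl⟩; exact ⟨u, u.2, hGsub u⟩
  · intro x
    obtain ⟨t, hxt⟩ := hFcov x
    have hbound := hGord t (hTuniv ▸ mem_univ t) x hxt
    refine le_trans ?_ hbound
    have heq : {w ∈ range (fun u : ↥U => G u) | x ∈ w}
        = (fun u : ↥U => G u) '' {u : ↥U | x ∈ G u} := by
      ext w
      constructor
      · rintro ⟨⟨u, rfl⟩, hxw⟩
        exact ⟨u, hxw, rfl⟩
      · rintro ⟨u, hu, rfl⟩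
        exact ⟨⟨u, rfl⟩, hu⟩
    rw [heq]
    exact Set.ncard_image_le (Set.toFinite _)
end

section
/- Let X be a compact approximative absolute retract and D an absolute neighborhood retract. Then every continuous map f : X → D is nullhomotopic. -/
set_option maxHeartbeats 1000000
set_option synthInstance.maxHeartbeats 1000000


open Set

/-- Approximative absolute retract. -/
def IsAAR (X : Type*) [MetricSpace X] : Prop :=
  ∀ (Y : Type) [MetricSpace Y] (Z : Set Y), IsClosed Z →
    ∀ f : C(Z, X), ∀ ε : ℝ, 0 < ε → ∃ g : C(Y, X), ∀ z : Z, dist (f z) (g (z : Y)) < ε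


/-- Absolute neighborhood retract. -/
def IsANR (X : Type*) [MetricSpace X] : Prop :=
  ∀ (Y : Type) [MetricSpace Y] (Z : Set Y), IsClosed Z →
    ∀ f : C(Z, X), ∃ (V : Set Y) (_ : IsOpen V) (hZV : Z ⊆ V) (g : C(V, X)),
      ∀ (z : Y) (hz : z ∈ Z), g ⟨z, hZV hz⟩ = f ⟨z, hz⟩

/-- Every map from a compact AAR into an ANR is nullhomotopic. -/
theorem stmt_17 {X D : Type} [MetricSpace X] [CompactSpace X] [MetricSpace D]
    (hX : IsAAR X) (hD : IsANR D) (f : C(X, D)) :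
    ∃ d : D, f.Homotopic (ContinuousMap.const X d) := by
  classical
  let E := lp (fun _ : ℕ => ℝ) (⊤ : ENNReal)
  let κ : X → E := kuratowskiEmbedding X
  have hκ : Isometry κ := kuratowskiEmbedding.isometry X
  have hκc : Continuous κ := hκ.continuous
  let A : Set E := Set.range κ
  have hAcomp : IsCompact A := isCompact_range hκc
  have hAclosed : IsClosed A := hAcomp.isClosed
  let eqv : X ≃ A := Equiv.ofInjective κ hκ.injective
  have heqvc : Continuous (eqv : X → A) := Continuous.subtype_mk hκc _
  let e : X ≃ₜ A := heqvc.homeoOfEquivCompactToT2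
  let r : C(A, X) := ⟨e.symm, e.symm.continuous⟩
  obtain ⟨V, hVopen, hAV, F, hF⟩ := hD E A hAclosed (f.comp r)
  obtain ⟨ε, hε, hthick⟩ := hAcomp.exists_thickening_subset_open hVopen hAV
  obtain ⟨g, hg⟩ := hX E A hAclosed r ε hε
  have hex : ∀ x : X, (⟨κ x, Set.mem_range_self x⟩ : A) = e x := fun x => Subtype.ext rfl
  have hrx : ∀ x : X, r ⟨κ x, Set.mem_range_self x⟩ = x := by
    intro x
    rw [hex x]
    exact e.symm_apply_apply x
  have hdist : ∀ x : X, dist x (g (κ x)) < ε := by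
    intro x
    have := hg (⟨κ x, Set.mem_range_self x⟩ : A)
    rwa [hrx x] at this
  -- points of the straight-line homotopy lie in V
  have hmem : ∀ (t : unitInterval) (x : X),
      κ x + (t : ℝ) • (κ (g (κ x)) - κ x) ∈ V := by
    intro t x
    apply hthick
    rw [Metric.mem_thickening_iff]
    refine ⟨κ x, Set.mem_range_self x, ?_⟩
    have h1 : dist (κ x + (t : ℝ) • (κ (g (κ x)) - κ x)) (κ x)
        = |(t : ℝ)| * ‖κ (g (κ x)) - κ x‖ := by
      rw [dist_eq_norm]
      simp [norm_smul]
    rw [h1]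
    calc |(t : ℝ)| * ‖κ (g (κ x)) - κ x‖ ≤ 1 * ‖κ (g (κ x)) - κ x‖ := by
          apply mul_le_mul_of_nonneg_right _ (norm_nonneg _)
          rw [abs_of_nonneg t.2.1]
          exact t.2.2
      _ = dist (κ (g (κ x))) (κ x) := by rw [one_mul, dist_eq_norm]
      _ = dist (g (κ x)) x := hκ.dist_eq _ _
      _ < ε := by rw [dist_comm]; exact hdist x
  -- the continuous map g ∘ κ
  let G : C(X, X) := ⟨fun x => g (κ x), g.continuous.comp hκc⟩
  -- first homotopy: f ≃ f ∘ G
  have H1 : f.Homotopic (f.comp G) := by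
    refine ⟨?_⟩
    refine
      { toFun := fun p => F ⟨κ p.2 + (p.1 : ℝ) • (κ (g (κ p.2)) - κ p.2), hmem p.1 p.2⟩
        continuous_toFun := ?_
        map_zero_left := ?_
        map_one_left := ?_ }
    · apply F.continuous.comp
      apply Continuous.subtype_mk
      have hc1 : Continuous fun p : unitInterval × X => κ p.2 := hκc.comp continuous_snd
      have hc2 : Continuous fun p : unitInterval × X => ((p.1 : ℝ)) :=
        continuous_subtype_val.comp continuous_fst
      have hc3 : Continuous fun p : unitInterval × X => κ (g (κ p.2)) - κ p.2 :=
        ((hκc.comp (g.continuous.comp (hκc.comp continuous_snd)))).sub hc1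
      exact hc1.add (hc2.smul hc3)
    · intro x
      have h0 : κ x + ((0 : unitInterval) : ℝ) • (κ (g (κ x)) - κ x) = κ x := by
        simp
      have := hF (κ x) (Set.mem_range_self x)
      simp only [ContinuousMap.comp_apply] at this
      rw [hrx x] at this
      calc F ⟨κ x + ((0 : unitInterval) : ℝ) • (κ (g (κ x)) - κ x), hmem 0 x⟩
          = F ⟨κ x, hAV (Set.mem_range_self x)⟩ := by congr 1; exact Subtype.ext h0
        _ = f x := this
    · intro x
      have h1 : κ x + ((1 : unitInterval) : ℝ) • (κ (g (κ x)) - κ x) = κ (g (κ x)) := by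
        simp
      have := hF (κ (g (κ x))) (Set.mem_range_self (g (κ x)))
      simp only [ContinuousMap.comp_apply] at this
      rw [hrx (g (κ x))] at this
      calc F ⟨κ x + ((1 : unitInterval) : ℝ) • (κ (g (κ x)) - κ x), hmem 1 x⟩
          = F ⟨κ (g (κ x)), hAV (Set.mem_range_self (g (κ x)))⟩ := by
            congr 1; exact Subtype.ext h1
        _ = f (G x) := this
  -- second homotopy: f ∘ G ≃ const, since G factors through the contractible space E
  let K : C(X, E) := ⟨κ, hκc⟩
  obtain ⟨c, hc⟩ := id_nullhomotopic E
  have H2 : ((f.comp g).comp K).Homotopic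
      ((f.comp g).comp ((ContinuousMap.const E c).comp K)) := by
    apply ContinuousMap.Homotopic.comp (ContinuousMap.Homotopic.refl _) _
    exact ContinuousMap.Homotopic.comp hc (ContinuousMap.Homotopic.refl K)
  have hGK : f.comp G = (f.comp g).comp K := rfl
  have hconst : (f.comp g).comp ((ContinuousMap.const E c).comp K)
      = ContinuousMap.const X (f (g c)) := rfl
  refine ⟨f (g c), ?_⟩
  have H2' : (f.comp G).Homotopic (ContinuousMap.const X (f (g c))) := by
    rw [hGK, ← hconst]
    exact H2
  exact H1.trans H2'
end
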